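/- Explicit rotational circumvention solutions: let κᶜ ≠ 0 be a constant with |κᶜ| < ν √γ_m, let r_c > 0 satisfy f(r_c) = (κᶜ/ν)², and let φ₁ ∈ ℝ and u_c* ∈ ℝ² be arbitrary. Then there exist radii r_d, r_e ≥ 0 and phases φ_d, φ_e ∈ ℝ such that the pair ū_d(t) := r_d (cos(κᶜ t/ν + φ_d), sin(κᶜ t/ν + φ_d)) + u_c* and ū_e(t) := r_e (cos(κᶜ t/ν + φ_e), sin(κᶜ t/ν + φ_e)) + u_c* solves the one-driver one-evader system for all t ∈ ℝ with the constant controls κᵖ(t) ≡ 1 and κᶜ(t) ≡ κᶜ, and moreover ū_d(t) − ū_e(t) = r_c (cos(κᶜ t/ν + φ₁), sin(κᶜ t/ν + φ₁)) for all t; that is, the driver and evader rotate with the same angular velocity κᶜ/ν about the common center u_c*. -/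

import Mathlib

open Real Filter MeasureTheory intervalIntegral
open scoped RealInnerProductSpace Topology

noncomputable section

/-- Perpendicular rotation in the plane: `(a, b)^⊥ = (-b, a)`. -/
def perp (w : EuclideanSpace ℝ (Fin 2)) : EuclideanSpace ℝ (Fin 2) :=
  (WithLp.equiv 2 (Fin 2 → ℝ)).symm ![-(w 1), w 0]

/-- The planar vector `r (cos θ, sin θ)`. -/
def circVec (r θ : ℝ) : EuclideanSpace ℝ (Fin 2) :=
  (WithLp.equiv 2 (Fin 2 → ℝ)).symm ![r * Real.cos θ, r * Real.sin θ]

def SolvesSys (fd fe : ℝ → ℝ) (ν : ℝ) (κp κc : ℝ → ℝ)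
    (ud ue : ℝ → EuclideanSpace ℝ (Fin 2)) (t : ℝ) : Prop :=
  deriv (deriv ud) t
      = -(κp t * fd ‖ud t - ue t‖) • (ud t - ue t)
        + κc t • perp (ud t - ue t) - ν • deriv ud t ∧
  deriv (deriv ue) t
      = -(fe ‖ud t - ue t‖) • (ud t - ue t) - ν • deriv ue t

/-- The linear identification of `ℂ` with the Euclidean plane. -/
def cL : ℂ →L[ℝ] EuclideanSpace ℝ (Fin 2) :=
  (EuclideanSpace.equiv (Fin 2) ℝ).symm.toContinuousLinearMap.comp
    (ContinuousLinearMap.pi ![Complex.reCLM, Complex.imCLM])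

lemma cL_apply (z : ℂ) : cL z = (WithLp.equiv 2 (Fin 2 → ℝ)).symm ![z.re, z.im] := by
  ext i; fin_cases i <;> simp [cL, ContinuousLinearMap.pi_apply]

lemma perp_cL (z : ℂ) : perp (cL z) = cL (Complex.I * z) := by
  rw [cL_apply, cL_apply]; unfold perp; ext i; fin_cases i <;> simp

lemma smul_cL (r : ℝ) (z : ℂ) : r • cL z = cL (↑r * z) := by
  rw [← Complex.real_smul, _root_.map_smul]

lemma norm_cL (z : ℂ) : ‖cL z‖ = ‖z‖ := by
  rw [cL_apply, EuclideanSpace.norm_eq, Complex.norm_def, Complex.normSq_apply]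
  congr 1
  rw [Fin.sum_univ_two]; simp [sq]

lemma circVec_eq (r θ : ℝ) : circVec r θ = cL (↑r * Complex.exp (↑θ * Complex.I)) := by
  rw [cL_apply]; unfold circVec; ext i
  fin_cases i <;> simp [Complex.exp_ofReal_mul_I_re, Complex.exp_ofReal_mul_I_im]

lemma circVec_shift (r φ ω t : ℝ) :
    circVec r (ω * t + φ) = cL ((↑r * Complex.exp (↑φ * Complex.I)) *
      Complex.exp (↑(ω*t) * Complex.I)) := by
  rw [circVec_eq]; congr 1
  rw [mul_assoc, ← Complex.exp_add]
  congr 1; push_cast; ring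

lemma circVec_arg (z : ℂ) (ω t : ℝ) :
    circVec ‖z‖ (ω * t + Complex.arg z) = cL (z * Complex.exp (↑(ω*t) * Complex.I)) := by
  rw [circVec_shift, Complex.norm_mul_exp_arg_mul_I]

lemma key (ω : ℝ) (z : ℂ) (t : ℝ) :
    HasDerivAt (fun s : ℝ => cL (z * Complex.exp (↑(ω*s) * Complex.I)))
      (cL (z * (↑ω * Complex.I) * Complex.exp (↑(ω*t) * Complex.I))) t := by
  have h0 : HasDerivAt (fun s : ℝ => (s : ℂ)) 1 t := by
    simpa using (hasDerivAt_id t).ofReal_comp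
  have h1 : HasDerivAt (fun s : ℝ => (↑(ω*s) : ℂ) * Complex.I) (↑ω * Complex.I) t := by
    have := h0.const_mul ((ω : ℂ) * Complex.I)
    simp only [mul_one] at this
    exact this.congr_of_eventuallyEq (Filter.Eventually.of_forall fun s => by push_cast; ring)
  have h4 := cL.hasFDerivAt.comp_hasDerivAt t (h1.cexp.const_mul z)
  rw [show z * (↑ω * Complex.I) * Complex.exp (↑(ω*t) * Complex.I)
      = z * (Complex.exp (↑(ω*t) * Complex.I) * (↑ω * Complex.I)) by ring]
  exact h4

set_option maxHeartbeats 1000000 in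
theorem explicit_rotational_circumvention_solution
    (fd fe : ℝ → ℝ) (rp γm : ℝ) (hrp : 0 < rp) (hγm : 0 < γm)
    (hfd_lip : LocallyLipschitzOn (Set.Ioi (0:ℝ)) fd)
    (hfe_lip : LocallyLipschitzOn (Set.Ioi (0:ℝ)) fe)
    (hf_neg : ∀ r : ℝ, 0 < r → r < rp → fd r - fe r < 0)
    (hf_nonneg : ∀ r : ℝ, rp ≤ r → 0 ≤ fd r - fe r)
    (hf_deriv : 0 < deriv (fun r => fd r - fe r) rp)
    (hfd_nonneg : ∀ r : ℝ, 0 < r → 0 ≤ fd r)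
    (hfd_bdd : ∃ C : ℝ, ∀ r : ℝ, 0 < r → fd r ≤ C)
    (hfd_lim : Filter.Tendsto fd Filter.atTop (nhds γm))
    (hfe_nonneg : ∀ r : ℝ, 0 < r → 0 ≤ fe r)
    (hfe_div : ¬ MeasureTheory.IntegrableOn (fun r => r * fe r) (Set.Ioc 0 rp))
    (hfe_lim : Filter.Tendsto fe Filter.atTop (nhds 0))
    (ν : ℝ) (hν : 0 < ν) (κc : ℝ) (hκc0 : κc ≠ 0) (hκc : |κc| < ν * Real.sqrt γm)
    (rc : ℝ) (hrc : 0 < rc) (hrceq : fd rc - fe rc = (κc / ν) ^ 2)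
    (φ₁ : ℝ) (ucstar : EuclideanSpace ℝ (Fin 2)) :
    ∃ rd re φd φe : ℝ, 0 ≤ rd ∧ 0 ≤ re ∧
      (∀ t : ℝ, SolvesSys fd fe ν (fun _ => 1) (fun _ => κc)
        (fun s => circVec rd (κc / ν * s + φd) + ucstar)
        (fun s => circVec re (κc / ν * s + φe) + ucstar) t) ∧
      (∀ t : ℝ, circVec rd (κc / ν * t + φd) - circVec re (κc / ν * t + φe)
        = circVec rc (κc / ν * t + φ₁)) := by
  set ω : ℝ := κc / ν with hωdef
  have hω : ω ≠ 0 := div_ne_zero hκc0 (ne_of_gt hν)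
  have hνC : (ν : ℂ) ≠ 0 := by exact_mod_cast hν.ne'
  have hκν : (κc : ℂ) = ↑ν * ↑ω := by
    rw [hωdef]; push_cast; rw [mul_comm, div_mul_cancel₀ _ hνC]
  set D : ℂ := -(↑ω)^2 + ↑ν * ↑ω * Complex.I with hDdef
  have hDim : D.im = ν * ω := by
    rw [hDdef]
    simp [pow_two]
  have hD : D ≠ 0 := by
    intro h
    rw [h] at hDim
    exact (mul_ne_zero hν.ne' hω) hDim.symm
  set z₁ : ℂ := ↑rc * Complex.exp (↑φ₁ * Complex.I) with hz₁def
  set zd : ℂ := z₁ * (-(↑(fd rc)) + ↑ν * ↑ω * Complex.I) / D with hzddef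
  set ze : ℂ := z₁ * (-(↑(fe rc))) / D with hzedef
  have hzdD : zd * D = z₁ * (-(↑(fd rc)) + ↑ν * ↑ω * Complex.I) := div_mul_cancel₀ _ hD
  have hzeD : ze * D = z₁ * (-(↑(fe rc))) := div_mul_cancel₀ _ hD
  have hcast : ((fd rc : ℂ)) - (fe rc) = (ω : ℂ)^2 := by exact_mod_cast hrceq
  have hzdze : zd - ze = z₁ := by
    have : (zd - ze) * D = z₁ * D := by
      rw [sub_mul, hzdD, hzeD, hDdef]
      linear_combination (-z₁) * hcast
    exact mul_right_cancel₀ hD this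
  -- the functions in cL form
  have hud : (fun s => circVec ‖zd‖ (ω * s + Complex.arg zd) + ucstar)
      = fun s => cL (zd * Complex.exp (↑(ω*s) * Complex.I)) + ucstar :=
    funext fun s => by rw [circVec_arg]
  have hue : (fun s => circVec ‖ze‖ (ω * s + Complex.arg ze) + ucstar)
      = fun s => cL (ze * Complex.exp (↑(ω*s) * Complex.I)) + ucstar :=
    funext fun s => by rw [circVec_arg]
  -- derivatives
  have hd1 : deriv (fun s => cL (zd * Complex.exp (↑(ω*s) * Complex.I)) + ucstar)
      = fun t => cL (zd * (↑ω * Complex.I) * Complex.exp (↑(ω*t) * Complex.I)) :=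
    funext fun t => ((key ω zd t).add_const ucstar).deriv
  have he1 : deriv (fun s => cL (ze * Complex.exp (↑(ω*s) * Complex.I)) + ucstar)
      = fun t => cL (ze * (↑ω * Complex.I) * Complex.exp (↑(ω*t) * Complex.I)) :=
    funext fun t => ((key ω ze t).add_const ucstar).deriv
  have hd1p : ∀ t, deriv (fun s => cL (zd * Complex.exp (↑(ω*s) * Complex.I)) + ucstar) t
      = cL (zd * (↑ω * Complex.I) * Complex.exp (↑(ω*t) * Complex.I)) :=
    fun t => ((key ω zd t).add_const ucstar).deriv
  have he1p : ∀ t, deriv (fun s => cL (ze * Complex.exp (↑(ω*s) * Complex.I)) + ucstar) t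
      = cL (ze * (↑ω * Complex.I) * Complex.exp (↑(ω*t) * Complex.I)) :=
    fun t => ((key ω ze t).add_const ucstar).deriv
  have hd2 : ∀ t, deriv (deriv (fun s => cL (zd * Complex.exp (↑(ω*s) * Complex.I)) + ucstar)) t
      = cL (zd * (↑ω * Complex.I) * (↑ω * Complex.I) * Complex.exp (↑(ω*t) * Complex.I)) :=
    fun t => by
      rw [hd1]
      have h := key ω (zd * (↑ω * Complex.I)) t
      exact h.deriv
  have he2 : ∀ t, deriv (deriv (fun s => cL (ze * Complex.exp (↑(ω*s) * Complex.I)) + ucstar)) t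
      = cL (ze * (↑ω * Complex.I) * (↑ω * Complex.I) * Complex.exp (↑(ω*t) * Complex.I)) :=
    fun t => by
      rw [he1]
      have h := key ω (ze * (↑ω * Complex.I)) t
      exact h.deriv
  have hFG : ∀ t : ℝ, (cL (zd * Complex.exp (↑(ω*t) * Complex.I)) + ucstar)
      - (cL (ze * Complex.exp (↑(ω*t) * Complex.I)) + ucstar)
      = cL (z₁ * Complex.exp (↑(ω*t) * Complex.I)) := fun t => by
    rw [add_sub_add_right_eq_sub, ← map_sub]
    congr 1
    linear_combination (Complex.exp (↑(ω*t) * Complex.I)) * hzdze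
  have hnormE : ∀ t : ℝ, ‖cL (z₁ * Complex.exp (↑(ω*t) * Complex.I))‖ = rc := fun t => by
    rw [norm_cL, hz₁def, norm_mul, norm_mul, Complex.norm_real, Real.norm_eq_abs,
      Complex.norm_exp_ofReal_mul_I, Complex.norm_exp_ofReal_mul_I, abs_of_pos hrc]
    ring
  refine ⟨‖zd‖, ‖ze‖, Complex.arg zd, Complex.arg ze,
    norm_nonneg _, norm_nonneg _, fun t => ?_, fun t => ?_⟩
  · unfold SolvesSys
    rw [hud, hue]
    simp only []
    rw [hFG t, hnormE t, hd2 t, he2 t, hd1p t, he1p t]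
    constructor
    · rw [perp_cL, smul_cL, smul_cL, smul_cL, ← map_add, ← map_sub]
      congr 1
      push_cast
      linear_combination (Complex.exp ((ω:ℂ) * t * Complex.I)) * hzdD
        + zd * (↑ω:ℂ)^2 * (Complex.exp ((ω:ℂ) * t * Complex.I)) * Complex.I_sq
        - (Complex.I * z₁ * Complex.exp ((ω:ℂ) * t * Complex.I)) * hκν
    · rw [smul_cL, smul_cL, ← map_sub]
      congr 1
      push_cast
      linear_combination (Complex.exp ((ω:ℂ) * t * Complex.I)) * hzeD
        + ze * (↑ω:ℂ)^2 * (Complex.exp ((ω:ℂ) * t * Complex.I)) * Complex.I_sq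
  · rw [circVec_arg, circVec_arg, ← map_sub, circVec_shift]
    congr 1
    linear_combination (Complex.exp (↑(ω*t) * Complex.I)) * hzdze
      + (Complex.exp (↑(ω*t) * Complex.I)) * hz₁def
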